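/- If A₀ and A₁ are co-c.e. hyperimmune subsets of ℕ, then A₀ ∪ A₁ is hyperimmune. -/

import Mathlib

open Classical

/-- The characteristic function of a set of naturals, as a partial function. -/
noncomputable def CharFun (X : Set ℕ) : ℕ →. ℕ :=
  fun n => Part.some (if n ∈ X then 1 else 0)

/-- Partial recursiveness relative to an oracle `O`. -/
inductive RecIn (O : ℕ →. ℕ) : (ℕ →. ℕ) → Prop
  | oracle : RecIn O O
  | zero : RecIn O (fun _ => Part.some 0)
  | succ : RecIn O (fun n => Part.some n.succ)
  | left : RecIn O (fun n => Part.some n.unpair.1)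
  | right : RecIn O (fun n => Part.some n.unpair.2)
  | pair {f g} : RecIn O f → RecIn O g →
      RecIn O (fun n => Nat.pair <$> f n <*> g n)
  | comp {f g} : RecIn O f → RecIn O g →
      RecIn O (fun n => g n >>= f)
  | prec {f g} : RecIn O f → RecIn O g →
      RecIn O (Nat.unpaired fun a n =>
        n.rec (f a) fun y IH => do {let i ← IH; g (Nat.pair a (Nat.pair y i))})
  | rfind {f} : RecIn O f →
      RecIn O (fun a => Nat.rfind fun n => (fun m => decide (m = 0)) <$> f (Nat.pair a n))

/-- A (typed) function is computable in oracle `O`. -/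
def ComputableInOracle {α β : Type} [Primcodable α] [Primcodable β] (O : ℕ →. ℕ) (f : α → β) : Prop :=
  RecIn O (fun n => Part.some (Encodable.encode (Option.map f (Encodable.decode (α := α) n))))

/-- A set of naturals is computable in oracle `O`. -/
def SetComputableIn (O : ℕ →. ℕ) (X : Set ℕ) : Prop :=
  RecIn O (CharFun X)

/-- A (typed) predicate is computably enumerable in oracle `O`. -/
def CEIn {α : Type} [Primcodable α] (O : ℕ →. ℕ) (p : α → Prop) : Prop :=
  ∃ f : ℕ →. ℕ, RecIn O f ∧ ∀ a : α, (f (Encodable.encode a)).Dom ↔ p a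

/-- A (typed) predicate is computably enumerable. -/
def CEPred {α : Type} [Primcodable α] (p : α → Prop) : Prop :=
  ∃ f : α →. Unit, Partrec f ∧ ∀ a, (f a).Dom ↔ p a

/-- A set of naturals is co-c.e. -/
def CoCE (A : Set ℕ) : Prop := CEPred (fun n => n ∉ A)

/-- The members of an array are mutually disjoint. -/
def ArrayDisjoint (F : ℕ → Finset ℕ) : Prop :=
  ∀ i j, i ≠ j → Disjoint (F i) (F j)

/-- An array traces a set `A` if each of its members meets `A`. -/
def Traces (F : ℕ → Finset ℕ) (A : Set ℕ) : Prop :=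
  ∀ i, ∃ x ∈ F i, x ∈ A

/-- A set is hyperimmune if it is infinite and not traced by any computable array. -/
def Hyperimmune (A : Set ℕ) : Prop :=
  A.Infinite ∧ ∀ F : ℕ → Finset ℕ, Computable F → ArrayDisjoint F → ¬ Traces F A

/-- A set is hyperimmune relative to the oracle `O`. -/
def HyperimmuneIn (O : ℕ →. ℕ) (A : Set ℕ) : Prop :=
  A.Infinite ∧ ∀ F : ℕ → Finset ℕ, ComputableInOracle O F → ArrayDisjoint F → ¬ Traces F A

/-- A set is immune if it is infinite and has no infinite computable subset. -/
def Immune (A : Set ℕ) : Prop :=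
  A.Infinite ∧ ∀ W : Set ℕ, W.Infinite → ComputablePred (· ∈ W) → ¬ W ⊆ A

/-- A set is immune relative to the oracle `O`. -/
def ImmuneIn (O : ℕ →. ℕ) (A : Set ℕ) : Prop :=
  A.Infinite ∧ ∀ W : Set ℕ, W.Infinite → SetComputableIn O W → ¬ W ⊆ A

/-- The effective join of two sets of naturals. -/
def SetJoin (Y Z : Set ℕ) : Set ℕ :=
  {n | if n % 2 = 0 then n / 2 ∈ Y else n / 2 ∈ Z}

/-- `X` is Turing reducible to `Z`. -/
def TuringLE (X Z : Set ℕ) : Prop := SetComputableIn (CharFun Z) X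

/-! ### Auxiliary machinery -/

namespace UnionHyperAux

open Nat.Partrec (Code)

/-- `raise'` computed by a fold. -/
private def rstep : (ℕ × List ℕ) → ℕ → (ℕ × List ℕ) :=
  fun p m => (m + p.1 + 1, (m + p.1) :: p.2)

private lemma foldl_raise' (l : List ℕ) :
    ∀ n acc, (l.foldl rstep (n, acc)).2 = (Denumerable.raise' l n).reverse ++ acc := by
  induction l with
  | nil => intro n acc; simp [Denumerable.raise']
  | cons m l ih => intro n acc; simp [Denumerable.raise', rstep, ih]

private lemma primrec_raise' : Primrec (fun l : List ℕ => Denumerable.raise' l 0) := by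
  have h1 : Primrec₂ (fun (_ : List ℕ) (q : (ℕ × List ℕ) × ℕ) => rstep q.1 q.2) := by
    have : Primrec (fun q : (ℕ × List ℕ) × ℕ => rstep q.1 q.2) := by
      unfold rstep
      exact Primrec.pair
        (Primrec.succ.comp (Primrec.nat_add.comp Primrec.snd (Primrec.fst.comp Primrec.fst)))
        (Primrec.list_cons.comp
          (Primrec.nat_add.comp Primrec.snd (Primrec.fst.comp Primrec.fst))
          (Primrec.snd.comp Primrec.fst))
    exact (this.comp Primrec.snd).to₂
  have h2 : Primrec (fun l : List ℕ => (l.foldl (fun s b => rstep s b) ((0 : ℕ), ([] : List ℕ))).2) :=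
    Primrec.snd.comp (Primrec.list_foldl Primrec.id (Primrec.const ((0 : ℕ), ([] : List ℕ))) h1)
  have h3 := Primrec.list_reverse.comp h2
  refine h3.of_eq fun l => ?_
  simp [foldl_raise']

/-- The sorted list of elements of a finset of naturals, recovered from its encoding. -/
def toL (s : Finset ℕ) : List ℕ :=
  Denumerable.raise'
    (Denumerable.ofNat (List ℕ) (@Encodable.encode (Finset ℕ) Primcodable.toEncodable s)) 0

lemma computable_toL : Computable toL :=
  (((primrec_raise'.comp (Primrec.ofNat (List ℕ))).comp Primrec.encode).to_comp).of_eq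
    fun _ => rfl

lemma mem_toL {x : ℕ} {s : Finset ℕ} : x ∈ toL s ↔ x ∈ s := by
  have h : (Denumerable.ofNat (Finset ℕ)
        (@Encodable.encode (Finset ℕ) Primcodable.toEncodable s)) =
      Finset.map (Denumerable.eqv ℕ).symm.toEmbedding
        (Denumerable.raise'Finset (Denumerable.ofNat (List ℕ)
          (@Encodable.encode (Finset ℕ) Primcodable.toEncodable s)) 0) :=
    Denumerable.ofNat_of_decode rfl
  rw [Denumerable.ofNat_encode s] at h
  conv_rhs => rw [h]
  simp [toL, Denumerable.raise'Finset, Denumerable.eqv, Finset.mem_map, Finset.mem_mk,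
    Function.Embedding.coeFn_mk, Equiv.coe_fn_symm_mk]
  exact Iff.rfl

private lemma all_foldr (p : ℕ → Bool) (l : List ℕ) :
    l.foldr (fun x b => p x && b) true = l.all p := by
  induction l with
  | nil => rfl
  | cons a l ih => simp [List.all_cons, ih]

section Code

variable (c : Code)

/-- `l.all (fun x => (evaln s c x).isSome)`, jointly primrec in `l` and `s`. -/
lemma primrec_allHalt :
    Primrec₂ (fun (l : List ℕ) (s : ℕ) => l.all (fun x => (Nat.Partrec.Code.evaln s c x).isSome)) := by
  have hes : Primrec₂ (fun (s x : ℕ) => (Nat.Partrec.Code.evaln s c x).isSome) := by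
    have := Nat.Partrec.Code.primrec_evaln
    exact (Primrec.option_isSome.comp
      (this.comp (Primrec.pair (Primrec.pair Primrec.fst (Primrec.const c)) Primrec.snd))).to₂
  have hh : Primrec₂ (fun (a : List ℕ × ℕ) (q : ℕ × Bool) =>
      ((Nat.Partrec.Code.evaln a.2 c q.1).isSome && q.2)) := by
    exact (Primrec.and.comp
      (hes.comp (Primrec.snd.comp Primrec.fst) (Primrec.fst.comp Primrec.snd))
      (Primrec.snd.comp Primrec.snd))
  have h := Primrec.list_foldr (Primrec.fst (α := List ℕ) (β := ℕ))
    (Primrec.const true) hh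
  refine h.of_eq fun p => ?_
  simpa using all_foldr (fun x => (Nat.Partrec.Code.evaln p.2 c x).isSome) p.1

lemma exists_all {l : List ℕ}
    (h : ∀ x ∈ l, ∃ s, (Nat.Partrec.Code.evaln s c x).isSome = true) :
    ∃ s, (l.all fun x => (Nat.Partrec.Code.evaln s c x).isSome) = true := by
  induction l with
  | nil => exact ⟨0, rfl⟩
  | cons a l ih =>
    obtain ⟨s₁, hs₁⟩ := h a List.mem_cons_self
    obtain ⟨s₂, hs₂⟩ := ih fun x hx => h x (List.mem_cons_of_mem _ hx)
    refine ⟨max s₁ s₂, ?_⟩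
    rw [List.all_cons, Bool.and_eq_true]
    constructor
    · obtain ⟨v, hv⟩ := Option.isSome_iff_exists.1 hs₁
      exact Option.isSome_iff_exists.2
        ⟨v, Nat.Partrec.Code.evaln_mono (le_max_left _ _) hv⟩
    · rw [List.all_eq_true] at hs₂ ⊢
      intro x hx
      obtain ⟨v, hv⟩ := Option.isSome_iff_exists.1 (hs₂ x hx)
      exact Option.isSome_iff_exists.2
        ⟨v, Nat.Partrec.Code.evaln_mono (le_max_right _ _) hv⟩

lemma exists_evaln_iff (x : ℕ) :
    (∃ s, (Nat.Partrec.Code.evaln s c x).isSome = true) ↔ (Nat.Partrec.Code.eval c x).Dom := by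
  constructor
  · rintro ⟨s, hs⟩
    obtain ⟨v, hv⟩ := Option.isSome_iff_exists.1 hs
    exact Part.dom_iff_mem.2 ⟨_, Nat.Partrec.Code.evaln_complete.2 ⟨s, hv⟩⟩
  · intro hd
    obtain ⟨s, hv⟩ := Nat.Partrec.Code.evaln_complete.1 (Part.get_mem hd)
    exact ⟨s, Option.isSome_iff_exists.2 ⟨_, hv⟩⟩

end Code

end UnionHyperAux

/-- If A₀ and A₁ are co-c.e. hyperimmune sets, then so is A₀ ∪ A₁. -/
theorem union_of_coCE_hyperimmune (A₀ A₁ : Set ℕ) (h₀ : CoCE A₀) (h₁ : CoCE A₁)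
    (hh₀ : Hyperimmune A₀) (hh₁ : Hyperimmune A₁) : Hyperimmune (A₀ ∪ A₁) := by
  open UnionHyperAux in
  constructor
  · exact hh₀.1.mono Set.subset_union_left
  intro F hF hdisj htr
  -- extract a code for the complement of A₀
  obtain ⟨f, hfp, hfd⟩ := h₀
  have hf' : Partrec (fun n => (f n).map fun _ => (0 : ℕ)) :=
    hfp.map ((Computable.const 0).comp Computable.fst).to₂
  obtain ⟨c, hc⟩ := Nat.Partrec.Code.exists_code.1 (Partrec.nat_iff.1 hf')
  have hdom : ∀ x : ℕ, (Nat.Partrec.Code.eval c x).Dom ↔ x ∉ A₀ := by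
    intro x
    have : (Nat.Partrec.Code.eval c x) = (f x).map fun _ => (0 : ℕ) := congrFun hc x
    rw [this]
    simp only [Part.map_Dom]
    simpa using hfd x
  -- the approximation predicate
  set D : ℕ → ℕ → Bool :=
    fun i s => (toL (F i)).all (fun x => (Nat.Partrec.Code.evaln s c x).isSome) with hD_def
  have hD : Computable₂ D :=
    ((primrec_allHalt c).to_comp.comp (computable_toL.comp (hF.comp Computable.fst))
      Computable.snd).to₂
  have hS : ∀ i, (∃ s, D i s = true) ↔ ∀ x ∈ F i, x ∉ A₀ := by
    intro i
    constructor
    · rintro ⟨s, hs⟩ x hx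
      rw [hD_def] at hs
      rw [List.all_eq_true] at hs
      have := hs x (mem_toL.2 hx)
      exact (hdom x).1 ((exists_evaln_iff c x).1 ⟨s, this⟩)
    · intro h
      exact exists_all c fun x hx =>
        (exists_evaln_iff c x).2 ((hdom x).2 (h x (mem_toL.1 hx)))
  by_cases hfin : {i | ∃ s, D i s = true}.Infinite
  · -- infinitely many F i avoid A₀; they all meet A₁
    have ex : ∀ n, ∃ k : ℕ, (decide (n < k.unpair.1) && D k.unpair.1 k.unpair.2) = true := by
      intro n
      obtain ⟨i, ⟨s, hs⟩, hni⟩ := hfin.exists_gt n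
      refine ⟨Nat.pair i s, ?_⟩
      simp [Nat.unpair_pair, hs, hni]
    have hP : Computable₂ (fun (n k : ℕ) => (decide (n < k.unpair.1) && D k.unpair.1 k.unpair.2)) := by
      have c1 : Computable fun p : ℕ × ℕ => decide (p.1 < p.2.unpair.1) :=
        (Primrec.nat_lt.comp Primrec.fst (Primrec.fst.comp (Primrec.unpair.comp Primrec.snd))).decide.to_comp
      have c2 : Computable fun p : ℕ × ℕ => D p.2.unpair.1 p.2.unpair.2 :=
        hD.comp (Computable.fst.comp (Computable.unpair.comp Computable.snd))
          (Computable.snd.comp (Computable.unpair.comp Computable.snd))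
      exact (Primrec.and.to_comp.comp c1 c2).to₂
    have hfind : Computable fun n => Nat.find (ex n) := by
      have h1 : Partrec fun n =>
          Nat.rfind fun k => Part.some (decide (n < k.unpair.1) && D k.unpair.1 k.unpair.2) :=
        Partrec.rfind hP.partrec₂
      refine h1.of_eq fun n => ?_
      apply Part.eq_some_iff.2
      apply Nat.mem_rfind.2
      constructor
      · exact Part.mem_some_iff.2 (Nat.find_spec (ex n)).symm
      · intro m hm
        apply Part.mem_some_iff.2
        have := Nat.find_min (ex n) hm
        simpa using this
    set step : ℕ → ℕ := fun n => (Nat.find (ex n)).unpair.1 with hstep_def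
    have hstep : Computable step := Computable.fst.comp (Computable.unpair.comp hfind)
    have hstep_gt : ∀ n, n < step n := by
      intro n
      have := Nat.find_spec (ex n)
      rw [Bool.and_eq_true] at this
      have h1 := of_decide_eq_true this.1
      simpa [hstep_def] using h1
    have hstep_mem : ∀ n, ∃ s, D (step n) s = true := by
      intro n
      have := Nat.find_spec (ex n)
      rw [Bool.and_eq_true] at this
      exact ⟨(Nat.find (ex n)).unpair.2, this.2⟩
    set idx : ℕ → ℕ := fun k => Nat.rec (step 0) (fun _ ih => step ih) k with hidx_def
    have hidx : Computable idx := by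
      have := Computable.nat_rec (Computable.id (α := ℕ)) (Computable.const (step 0))
        ((hstep.comp (Computable.snd.comp Computable.snd)).to₂
          (α := ℕ) (β := ℕ × ℕ) (σ := ℕ))
      exact this.of_eq fun n => by induction n <;> simp [hidx_def, *]
    have hidx_mono : StrictMono idx := by
      apply strictMono_nat_of_lt_succ
      intro n
      exact hstep_gt (idx n)
    have hidx_mem : ∀ k, ∃ s, D (idx k) s = true := by
      intro k
      cases k with
      | zero => exact hstep_mem 0
      | succ k => exact hstep_mem (idx k)
    apply hh₁.2 (fun k => F (idx k)) (hF.comp hidx)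
    · intro i j hij
      exact hdisj _ _ (fun h => hij (hidx_mono.injective h))
    · intro k
      obtain ⟨x, hxF, hxA⟩ := htr (idx k)
      have hxA₀ : x ∉ A₀ := (hS (idx k)).1 (hidx_mem k) x hxF
      rcases hxA with h | h
      · exact absurd h hxA₀
      · exact ⟨x, hxF, h⟩
  · -- only finitely many F i avoid A₀; the rest meet A₀
    obtain ⟨N, hN⟩ := (Set.not_infinite.1 hfin).bddAbove
    apply hh₀.2 (fun k => F (N + 1 + k))
      (hF.comp ((Primrec.nat_add.comp (Primrec.const (N + 1)) Primrec.id).to_comp))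
    · intro i j hij
      exact hdisj _ _ (fun h => hij (by omega))
    · intro k
      have hnot : ¬∀ x ∈ F (N + 1 + k), x ∉ A₀ := by
        intro h
        have : N + 1 + k ∈ {i | ∃ s, D i s = true} := (hS _).2 h
        have := hN this
        omega
      push_neg at hnot
      obtain ⟨x, hxF, hxA⟩ := hnot
      exact ⟨x, hxF, hxA⟩
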